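/- Let p be an odd prime. Then in F_p[X] one has the identity Σ_{r=0}^{p-1} (P̄_r(X))² = (X²-1)^{(p-1)/2}. -/

import Mathlib

open Polynomial Finset

/-! ### Auxiliary lemmas -/

lemma aux_cast_ne (p n : ℕ) [Fact p.Prime] (h0 : 0 < n) (h : n < p) : ((n : ℕ) : ZMod p) ≠ 0 := by
  have := Fact.out (p := p.Prime)
  rw [Ne, ZMod.natCast_eq_zero_iff]
  exact fun hd => absurd (Nat.le_of_dvd h0 hd) (by omega)

lemma central_binom_cong (p : ℕ) [Fact p.Prime] (hodd : Odd p) :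
    ∀ n, n < p → ((((p-1)/2).choose n : ℕ) : ZMod p) * (-4 : ZMod p) ^ n
      = (((2*n).choose n : ℕ) : ZMod p) := by
  have hp := Fact.out (p := p.Prime)
  have hm : 2 * ((p-1)/2) = p - 1 := by obtain ⟨t, rfl⟩ := hodd; omega
  set m := (p-1)/2 with hmdef
  have h2m : (2 : ZMod p) * ((m : ℕ) : ZMod p) = -1 := by
    have h1 : ((2 * m : ℕ) : ZMod p) = ((p - 1 : ℕ) : ZMod p) := by rw [hm]
    have hp1 : ((p - 1 : ℕ) : ZMod p) = -1 := by
      have hle : (1:ℕ) ≤ p := hp.one_lt.le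
      have : ((p - 1 : ℕ) : ZMod p) = (p : ZMod p) - 1 := by push_cast [Nat.cast_sub hle]; ring
      rw [this, ZMod.natCast_self]; ring
    push_cast at h1
    rw [h1, hp1]
  intro n
  induction n with
  | zero => simp
  | succ n ih =>
    intro hn1
    have hn : n < p := by omega
    have ih := ih hn
    have inv : ((n + 1 : ℕ) : ZMod p) ≠ 0 := aux_cast_ne p (n+1) (by omega) hn1
    apply mul_left_cancel₀ inv
    have e1 : (m.choose (n+1) * (n+1) : ℕ) = m.choose n * (m - n) := Nat.choose_succ_right_eq m n
    have e2 : ((n+1) * (2*(n+1)).choose (n+1) : ℕ) = 2 * (2*n+1) * ((2*n).choose n) := by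
      have := Nat.succ_mul_centralBinom_succ n
      simpa [Nat.centralBinom] using this
    have c1 : ((n+1:ℕ) : ZMod p) * (((m.choose (n+1) : ℕ) : ZMod p) * (-4)^(n+1))
        = ((m.choose n * (m-n) : ℕ) : ZMod p) * (-4)^(n+1) := by
      rw [← e1]; push_cast; ring
    have c2 : ((n+1:ℕ) : ZMod p) * (((2*(n+1)).choose (n+1) : ℕ) : ZMod p)
        = ((2*(2*n+1) * ((2*n).choose n) : ℕ) : ZMod p) := by
      rw [← e2]; push_cast; ring
    rw [c1, c2]
    push_cast
    rw [← ih]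
    rcases le_or_gt n m with hnm | hnm
    · have : ((m - n : ℕ) : ZMod p) = ((m:ℕ) : ZMod p) - ((n:ℕ) : ZMod p) := by
        push_cast [Nat.cast_sub hnm]; ring
      rw [this]
      linear_combination ((-2 : ZMod p) * ((m.choose n : ℕ) : ZMod p) * (-4)^n) * h2m
    · have h1 : m.choose n = 0 := Nat.choose_eq_zero_of_lt hnm
      have h2 : m - n = 0 := by omega
      rw [h1, h2]
      push_cast
      ring

lemma choose_p_sub_one (p : ℕ) [Fact p.Prime] :
    ∀ j, j ≤ p - 1 → (((p-1).choose j : ℕ) : ZMod p) = (-1 : ZMod p)^j := by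
  have hp := Fact.out (p := p.Prime)
  intro j
  induction j with
  | zero => simp
  | succ j ih =>
    intro hj1
    have ih := ih (by omega)
    have hpas : (p-1).choose j + (p-1).choose (j+1) = p.choose (j+1) := by
      have h := Nat.choose_succ_succ (p-1) j
      simp only [Nat.succ_eq_add_one] at h; rw [show p - 1 + 1 = p by omega] at h
      omega
    have hdvd : (p : ℕ) ∣ p.choose (j+1) := hp.dvd_choose_self (by omega) (by omega)
    have hz : (((p-1).choose j + (p-1).choose (j+1) : ℕ) : ZMod p) = 0 := by
      rw [hpas]
      exact (ZMod.natCast_eq_zero_iff _ _).mpr hdvd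
    push_cast at hz
    rw [ih] at hz
    have : (((p-1).choose (j+1) : ℕ) : ZMod p) = -((-1:ZMod p)^j) := by linear_combination hz
    rw [this]; ring

/-! ### Coefficients of `(1 + c·X + X²)^N` -/

lemma one_add_sq_pow {R : Type*} [CommRing R] (M : ℕ) :
    ((1 : R[X]) + X^2)^M = ∑ i ∈ range (M+1), C ((M.choose i : ℕ) : R) * X^(2*i) := by
  rw [add_comm, add_pow]
  refine Finset.sum_congr rfl (fun i hi => ?_)
  rw [one_pow, mul_one, C_eq_natCast, pow_mul]
  ring

lemma expand_f {R : Type*} [CommRing R] (c : R) (N : ℕ) :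
    ((1 : R[X]) + C c * X + X^2)^N
      = ∑ j ∈ range (N+1), ∑ i ∈ range (N-j+1),
          C (((N.choose j * (N-j).choose i : ℕ) : R) * c^j) * X^(j + 2*i) := by
  have h1 : ((1 : R[X]) + C c * X + X^2) = C c * X + (1 + X^2) := by ring
  rw [h1, add_pow]
  refine Finset.sum_congr rfl (fun j hj => ?_)
  rw [one_add_sq_pow, mul_pow, ← C_pow, Finset.mul_sum, Finset.sum_mul]
  refine Finset.sum_congr rfl (fun i hi => ?_)
  rw [← C_eq_natCast (N.choose j), Nat.cast_mul]
  simp only [C_mul, pow_add]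
  ring

lemma coeff_f_pow {R : Type*} [CommRing R] (c : R) (N r : ℕ) :
    (((1 : R[X]) + C c * X + X^2)^N).coeff r
      = ∑ k ∈ range (r/2 + 1), ((N.choose (r-2*k) * (N-(r-2*k)).choose k : ℕ) : R) * c^(r-2*k) := by
  rw [expand_f]
  rw [finset_sum_coeff]
  simp only [finset_sum_coeff, coeff_C_mul, coeff_X_pow, mul_ite, mul_one, mul_zero]
  have hbig : ∀ j, range (N - j + 1) ⊆ range (N + r + 1) := fun j => by
    apply Finset.range_subset_range.mpr; omega
  have step1 : ∀ j ∈ range (N+1),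
      (∑ i ∈ range (N-j+1), if r = j + 2*i then ((N.choose j * (N-j).choose i : ℕ) : R) * c^j else 0)
      = ∑ i ∈ range (N+r+1), if r = j + 2*i then ((N.choose j * (N-j).choose i : ℕ) : R) * c^j else 0 := by
    intro j hj
    apply Finset.sum_subset (hbig j)
    intro i hi hni
    have : (N-j).choose i = 0 := Nat.choose_eq_zero_of_lt (by simp [Finset.mem_range] at hi hni ⊢; omega)
    simp [this]
  rw [Finset.sum_congr rfl step1]
  rw [Finset.sum_subset (Finset.range_subset_range.mpr (by omega : N + 1 ≤ N + r + 1))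
    (by intro j hj hnj
        have : N.choose j = 0 := Nat.choose_eq_zero_of_lt (by simp [Finset.mem_range] at hj hnj ⊢; omega)
        simp [this])]
  rw [Finset.sum_comm]
  have step2 : ∀ i ∈ range (N+r+1),
      (∑ j ∈ range (N+r+1), if r = j + 2*i then ((N.choose j * (N-j).choose i : ℕ) : R) * c^j else 0)
      = if 2*i ≤ r then ((N.choose (r-2*i) * (N-(r-2*i)).choose i : ℕ) : R) * c^(r-2*i) else 0 := by
    intro i hi
    rcases le_or_gt (2*i) r with h | h
    · have hcong : ∀ j ∈ range (N+r+1),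
          (if r = j + 2*i then ((N.choose j * (N-j).choose i : ℕ) : R) * c^j else 0)
          = (if j = r - 2*i then ((N.choose j * (N-j).choose i : ℕ) : R) * c^j else 0) := by
        intro j hj
        congr 1
        simp only [eq_iff_iff]
        omega
      rw [Finset.sum_congr rfl hcong, Finset.sum_ite_eq' (range (N+r+1)) (r - 2*i)]
      rw [if_pos (Finset.mem_range.mpr (by omega))]
      rw [if_pos h]
    · rw [if_neg (by omega)]
      apply Finset.sum_eq_zero
      intro j hj
      rw [if_neg (by omega)]
  rw [Finset.sum_congr rfl step2]
  rw [← Finset.sum_subset (Finset.range_subset_range.mpr (by omega : r/2 + 1 ≤ N + r + 1))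
    (by intro i hi hni
        rw [if_neg (by simp [Finset.mem_range] at hi hni ⊢; omega)])]
  refine Finset.sum_congr rfl (fun k hk => ?_)
  rw [if_pos (by simp [Finset.mem_range] at hk; omega)]

/-! ### Palindromicity -/

section Rev
variable {R : Type*} [CommRing R]

lemma qdeg (c : R) : degree (C c * X + 1 : R[X]) < 2 := by
  have h : degree (C c * X + C 1 : R[X]) ≤ 1 := degree_linear_le
  rw [map_one] at h
  exact lt_of_le_of_lt h (by norm_num)

lemma monic_f (c : R) : Monic (1 + C c * X + X^2 : R[X]) := by
  have h : (1 + C c * X + X^2 : R[X]) = X^2 + (C c * X + 1) := by ring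
  rw [h]
  exact monic_X_pow_add (qdeg c)

lemma natDegree_f [Nontrivial R] (c : R) : natDegree (1 + C c * X + X^2 : R[X]) = 2 := by
  have h : (1 + C c * X + X^2 : R[X]) = X^2 + (C c * X + 1) := by ring
  rw [h]
  have hd : degree (X^2 + (C c * X + 1) : R[X]) = 2 := by
    rw [degree_add_eq_left_of_degree_lt (by rw [degree_X_pow]; exact_mod_cast qdeg c), degree_X_pow]
    norm_num
  exact natDegree_eq_of_degree_eq_some hd

lemma coeff_f (c : R) : ∀ n, (1 + C c * X + X^2 : R[X]).coeff n
    = if n = 0 then 1 else if n = 1 then c else if n = 2 then 1 else 0 := by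
  intro n
  match n with
  | 0 => simp
  | 1 => simp [coeff_one]
  | 2 => simp [coeff_one]
  | (n+3) => simp [coeff_one, coeff_X, coeff_X_pow]

lemma reverse_f [Nontrivial R] (c : R) : reverse (1 + C c * X + X^2 : R[X]) = 1 + C c * X + X^2 := by
  ext n
  rw [coeff_reverse, natDegree_f]
  rcases le_or_gt n 2 with h | h
  · rw [revAt_le h, coeff_f, coeff_f]
    interval_cases n <;> norm_num
  · rw [revAt_eq_self_of_lt h]

lemma reverse_f_pow [Nontrivial R] [IsDomain R] (c : R) (n : ℕ) :
    reverse ((1 + C c * X + X^2 : R[X])^n) = (1 + C c * X + X^2 : R[X])^n := by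
  induction n with
  | zero =>
    rw [pow_zero]
    simpa using reverse_C (1 : R)
  | succ n ih => rw [pow_succ, reverse_mul_of_domain, ih, reverse_f]

lemma coeff_symm [Nontrivial R] [IsDomain R] (c : R) (m r : ℕ) (hr : r ≤ 2*m) :
    ((1 + C c * X + X^2 : R[X])^m).coeff r = ((1 + C c * X + X^2 : R[X])^m).coeff (2*m - r) := by
  conv_lhs => rw [← reverse_f_pow c m]
  rw [coeff_reverse, (monic_f c).natDegree_pow, natDegree_f, revAt_le (by omega)]
  congr 1
  omega

end Rev

/-! ### Combinatorial identities -/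

lemma pow_sign_id {A : Type*} [CommRing A] (j k : ℕ) :
    (-2 : A)^j * 2^(j+2*k) = (-1:A)^k * (-4)^(j+k) := by
  induction k with
  | zero => simp [← mul_pow]; norm_num
  | succ k ih =>
    rw [show j + 2*(k+1) = (j + 2*k) + 2 by ring, pow_add,
        show j + (k+1) = (j+k)+1 by ring, pow_succ, pow_succ]
    linear_combination (4:A) * ih

lemma nat_id1 (m j k : ℕ) : m.choose j * (m-j).choose k = m.choose (j+k) * (j+k).choose k := by
  rcases le_or_gt (j+k) m with h | h
  · have h1 := Nat.choose_mul (n := m) (show j ≤ j+k by omega)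
    rw [show (j+k)-j = k by omega] at h1
    have hsym : (j+k).choose j = (j+k).choose k := by
      have h2 := Nat.choose_symm (show k ≤ j+k by omega)
      rwa [show (j+k)-k = j by omega] at h2
    rw [← h1, hsym]
  · have h2 : m.choose (j+k) = 0 := Nat.choose_eq_zero_of_lt h
    rw [h2, zero_mul]
    rcases le_or_gt j m with hj | hj
    · have : (m-j).choose k = 0 := Nat.choose_eq_zero_of_lt (by omega)
      rw [this, mul_zero]
    · have : m.choose j = 0 := Nat.choose_eq_zero_of_lt hj
      rw [this, zero_mul]

lemma nat_id2 (r k : ℕ) (h : 2*k ≤ r) :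
    (r-k).choose k * (2*(r-k)).choose (r-k) = r.choose k * (2*(r-k)).choose r := by
  have h1 := Nat.choose_mul (n := 2*(r-k)) (show k ≤ r-k by omega)
  have h2 := Nat.choose_mul (n := 2*(r-k)) (show k ≤ r by omega)
  have h3 : (2*(r-k)-k).choose ((r-k)-k) = (2*(r-k)-k).choose (r-k) := by
    rw [show (r-k)-k = (2*(r-k)-k)-(r-k) by omega]
    exact Nat.choose_symm (by omega)
  calc (r-k).choose k * (2*(r-k)).choose (r-k)
      = (2*(r-k)).choose (r-k) * (r-k).choose k := by ring
    _ = (2*(r-k)).choose k * (2*(r-k)-k).choose ((r-k)-k) := h1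
    _ = (2*(r-k)).choose k * (2*(r-k)-k).choose (r-k) := by rw [h3]
    _ = (2*(r-k)).choose r * r.choose k := h2.symm
    _ = r.choose k * (2*(r-k)).choose r := by ring

/-! ### Scalar identities mod p -/

lemma scalarA (p : ℕ) [Fact p.Prime] (hodd : Odd p) (r k : ℕ) (hr : r < p) (hk : 2*k ≤ r) :
    ((((p-1)/2).choose (r-2*k) * (((p-1)/2)-(r-2*k)).choose k : ℕ) : ZMod p) * (-2 : ZMod p)^(r-2*k)
      = ((2 : ZMod p)^r)⁻¹ *
        ((-1 : ZMod p)^k * ((r.choose k : ℕ) : ZMod p) * (((2*r-2*k).choose r : ℕ) : ZMod p)) := by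
  have hp := Fact.out (p := p.Prime)
  have hp3 : 3 ≤ p := by
    obtain ⟨t, rfl⟩ := hodd
    have := hp.two_le
    omega
  set m := (p-1)/2 with hmdef
  have h2 : (2 : ZMod p) ≠ 0 := by
    have := aux_cast_ne p 2 (by norm_num) (by omega)
    simpa using this
  have h4 : (-4 : ZMod p) ≠ 0 := by
    have e : (-4 : ZMod p) = -(2^2) := by ring
    rw [e]
    exact neg_ne_zero.mpr (pow_ne_zero 2 h2)
  have hpow2 : (2:ZMod p)^r ≠ 0 := pow_ne_zero _ h2
  rw [inv_mul_eq_div, eq_div_iff hpow2]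
  have hn1 : m.choose (r-2*k) * (m-(r-2*k)).choose k = m.choose (r-k) * (r-k).choose k := by
    rw [nat_id1 m (r-2*k) k, show r-2*k+k = r-k by omega]
  rw [hn1]
  have hL := central_binom_cong p hodd (r-k) (by omega)
  have hn2c : (((r-k).choose k : ℕ) : ZMod p) * (((2*(r-k)).choose (r-k) : ℕ) : ZMod p)
      = ((r.choose k : ℕ) : ZMod p) * (((2*(r-k)).choose r : ℕ) : ZMod p) := by
    exact_mod_cast congrArg (Nat.cast (R := ZMod p)) (nat_id2 r k hk)
  have hP : (-2 : ZMod p)^(r-2*k) * 2^r = (-1:ZMod p)^k * (-4)^(r-k) := by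
    have h := pow_sign_id (A := ZMod p) (r-2*k) k
    rw [show r-2*k+2*k = r by omega, show r-2*k+k = r-k by omega] at h
    exact h
  rw [show 2*r-2*k = 2*(r-k) by omega]
  push_cast
  linear_combination (((m.choose (r-k) : ℕ) : ZMod p) * (((r-k).choose k : ℕ) : ZMod p)) * hP
    + (-1:ZMod p)^k * (((r-k).choose k : ℕ) : ZMod p) * hL
    + (-1:ZMod p)^k * hn2c

lemma scalarC (p : ℕ) [Fact p.Prime] (hodd : Odd p) (k : ℕ) (hk : k ≤ (p-1)/2) :
    (((p-1).choose (p-1-2*k) * (2*k).choose k : ℕ) : ZMod p) * (-2 : ZMod p)^(p-1-2*k)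
      = ((((p-1)/2).choose k : ℕ) : ZMod p) * (-1 : ZMod p)^k := by
  have hp := Fact.out (p := p.Prime)
  have hp3 : 3 ≤ p := by
    obtain ⟨t, rfl⟩ := hodd
    have := hp.two_le
    omega
  have hm : 2 * ((p-1)/2) = p - 1 := by obtain ⟨t, rfl⟩ := hodd; omega
  set m := (p-1)/2 with hmdef
  have h2 : (2 : ZMod p) ≠ 0 := by
    have := aux_cast_ne p 2 (by norm_num) (by omega)
    simpa using this
  have h4 : (4 : ZMod p) ≠ 0 := by
    have e : (4 : ZMod p) = 2^2 := by norm_num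
    rw [e]; exact pow_ne_zero 2 h2
  have hCP : (((p-1).choose (p-1-2*k) : ℕ) : ZMod p) = 1 := by
    rw [choose_p_sub_one p (p-1-2*k) (by omega)]
    exact Even.neg_one_pow ⟨m - k, by omega⟩
  have hL := central_binom_cong p hodd k (by omega)
  have hE : (-2 : ZMod p)^(p-1-2*k) = 4^(m-k) := by
    rw [show p-1-2*k = 2*(m-k) by omega, pow_mul]
    norm_num
  have h4m : (4 : ZMod p)^(m-k) * 4^k = 1 := by
    rw [← pow_add, show m-k+k = m by omega]
    have : (4 : ZMod p)^m = 2^(p-1) := by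
      rw [show (4:ZMod p) = 2^2 by norm_num, ← pow_mul, hm]
    rw [this]
    exact ZMod.pow_card_sub_one_eq_one h2
  have hneg4 : (-4 : ZMod p)^k = (-1:ZMod p)^k * 4^k := by
    rw [show (-4 : ZMod p) = (-1) * 4 by ring, mul_pow]
  push_cast
  rw [hCP, hE, one_mul]
  apply mul_right_cancel₀ (pow_ne_zero k h4)
  -- goal : ↑C(2k,k) * 4^(m-k) * 4^k = ↑C(m,k) * (-1)^k * 4^k
  calc (((2*k).choose k : ℕ) : ZMod p) * 4^(m-k) * 4^k
      = (((2*k).choose k : ℕ) : ZMod p) * (4^(m-k) * 4^k) := by ring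
    _ = (((2*k).choose k : ℕ) : ZMod p) := by rw [h4m, mul_one]
    _ = ((m.choose k : ℕ) : ZMod p) * (-4)^k := hL.symm
    _ = ((m.choose k : ℕ) : ZMod p) * (-1)^k * 4^k := by rw [hneg4]; ring


/-- The mod-`p` reduction of the `r`-th Legendre polynomial
`P_r(X) = 2^{-r} · Σ_{k=0}^{⌊r/2⌋} (-1)^k · C(r,k) · C(2r-2k, r) · X^{r-2k}`,
defined directly over any field `E` (intended: of odd characteristic). -/
noncomputable def legendreMod (E : Type*) [Field E] (r : ℕ) : E[X] :=
  C (((2 : E) ^ r)⁻¹) * ∑ k ∈ Finset.range (r / 2 + 1),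
    C ((-1 : E) ^ k * (r.choose k : E) * (((2 * r - 2 * k).choose r : ℕ) : E)) * X ^ (r - 2 * k)

/-- For an odd prime `p`, in `F_p[X]` one has
`Σ_{r=0}^{p-1} (P̄_r(X))² = (X²-1)^{(p-1)/2}`. -/
theorem sum_legendreMod_sq_eq (p : ℕ) [Fact p.Prime] (hodd : Odd p) :
    ∑ r ∈ Finset.range p, (legendreMod (ZMod p) r) ^ 2 =
      (X ^ 2 - 1) ^ ((p - 1) / 2) := by
  have hp := Fact.out (p := p.Prime)
  have hp3 : 3 ≤ p := by obtain ⟨t, rfl⟩ := hodd; have := hp.two_le; omega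
  have hm : 2 * ((p-1)/2) = p - 1 := by obtain ⟨t, rfl⟩ := hodd; omega
  set m := (p-1)/2 with hmdef
  set c : (ZMod p)[X] := C (-2 : ZMod p) * X with hc
  set f : ((ZMod p)[X])[X] := 1 + C c * X + X^2 with hf
  -- Claim A : Legendre polynomials are the coefficients of f^m
  have hA : ∀ r < p, legendreMod (ZMod p) r = (f^m).coeff r := by
    intro r hr
    rw [hf, coeff_f_pow]
    unfold legendreMod
    rw [Finset.mul_sum]
    refine Finset.sum_congr rfl (fun k hk => ?_)
    have hk2 : 2*k ≤ r := by
      rw [Finset.mem_range] at hk; omega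
    have e1 : (C (((2 : ZMod p) ^ r)⁻¹) *
          (C ((-1 : ZMod p) ^ k * (r.choose k : ZMod p) * (((2 * r - 2 * k).choose r : ℕ) : ZMod p))
            * X ^ (r - 2 * k)) : (ZMod p)[X])
        = C (((2 : ZMod p)^r)⁻¹ * ((-1 : ZMod p) ^ k * ((r.choose k : ℕ) : ZMod p)
            * (((2 * r - 2 * k).choose r : ℕ) : ZMod p))) * X ^ (r-2*k) := by
      simp only [C_mul]; ring
    have e2 : (((m.choose (r-2*k) * (m-(r-2*k)).choose k : ℕ) : (ZMod p)[X]) * c^(r-2*k))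
        = C (((m.choose (r-2*k) * (m-(r-2*k)).choose k : ℕ) : ZMod p) * (-2:ZMod p)^(r-2*k))
            * X^(r-2*k) := by
      rw [hc, mul_pow, ← C_pow, ← C_eq_natCast]
      simp only [C_mul]; ring
    rw [e1, e2]
    congr 1
    exact congrArg C (scalarA p hodd r k hr hk2).symm
  -- replace the summands
  have hsq : ∀ r ∈ Finset.range p, (legendreMod (ZMod p) r)^2
      = (f^m).coeff r * (f^m).coeff (p-1-r) := by
    intro r hr
    rw [Finset.mem_range] at hr
    rw [hA r hr, pow_two]
    congr 1
    rw [hf]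
    rw [coeff_symm c m r (by omega), show 2*m - r = p-1-r by omega]
  rw [Finset.sum_congr rfl hsq]
  -- the sum is a coefficient of f^(p-1)
  have hcm : (f^m * f^m).coeff (p-1) = ∑ r ∈ Finset.range p, (f^m).coeff r * (f^m).coeff (p-1-r) := by
    rw [Polynomial.coeff_mul,
      Finset.Nat.sum_antidiagonal_eq_sum_range_succ (fun i j => (f^m).coeff i * (f^m).coeff j) (p-1)]
    rw [show (p-1).succ = p by omega]
  rw [← hcm, ← pow_add, show m + m = p - 1 by omega]
  rw [hf, coeff_f_pow]
  -- expand the right-hand side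
  have hrhs : ((X:(ZMod p)[X])^2 - 1)^m
      = ∑ k ∈ Finset.range (m+1),
          ((X:(ZMod p)[X])^2)^(m+1-1-k) * (-1:(ZMod p)[X])^(m-(m+1-1-k))
            * ((m.choose (m+1-1-k) : ℕ) : (ZMod p)[X]) := by
    rw [show ((X:(ZMod p)[X])^2 - 1) = (X^2 + (-1)) by ring, add_pow]
    exact (Finset.sum_range_reflect
      (fun i => ((X:(ZMod p)[X])^2)^i * (-1:(ZMod p)[X])^(m-i) * ((m.choose i : ℕ) : (ZMod p)[X]))
      (m+1)).symm
  rw [hrhs]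
  refine Finset.sum_congr rfl (fun k hk => ?_)
  have hkm : k ≤ m := by rw [Finset.mem_range] at hk; omega
  have ek : m+1-1-k = m-k := by omega
  rw [ek, show m-(m-k) = k by omega, Nat.choose_symm hkm]
  -- now equate the two monomials
  have eL : (((p-1).choose (p-1-2*k) * ((p-1)-(p-1-2*k)).choose k : ℕ) : (ZMod p)[X]) * c^(p-1-2*k)
      = C ((((p-1).choose (p-1-2*k) * (2*k).choose k : ℕ) : ZMod p) * (-2:ZMod p)^(p-1-2*k))
          * X^(p-1-2*k) := by
    rw [show (p-1)-(p-1-2*k) = 2*k by omega, hc, mul_pow, ← C_pow, ← C_eq_natCast]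
    simp only [C_mul]; ring
  have eR : ((X:(ZMod p)[X])^2)^(m-k) * (-1:(ZMod p)[X])^k * ((m.choose k : ℕ) : (ZMod p)[X])
      = C (((m.choose k : ℕ) : ZMod p) * (-1 : ZMod p)^k) * X^(p-1-2*k) := by
    rw [← pow_mul, show 2*(m-k) = p-1-2*k by omega, ← C_eq_natCast]
    rw [show ((-1:(ZMod p)[X]))^k = C ((-1:ZMod p)^k) by rw [map_pow, map_neg, map_one]]
    simp only [C_mul]; ring
  rw [eL, eR]
  congr 1
  exact congrArg C (scalarC p hodd k hkm)
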